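/- Let $\mathscr{A}$ be an abelian category and suppose we are given two short exact sequences $0 \to M_1 \xrightarrow{(\iota_1,\iota_2)^T} F \oplus M_2 \xrightarrow{(\nu_1,\nu_2)} M_3 \to 0$ and $0 \to M_2 \xrightarrow{(\nu_2,\nu_3)^T} M_3 \oplus M_4 \xrightarrow{(\mu_1,\mu_2)} M_5 \to 0$. Then the sequence $0 \to M_1 \xrightarrow{(\iota_1, \nu_3\iota_2)^T} F \oplus M_4 \xrightarrow{(\mu_1\nu_1, -\mu_2)} M_5 \to 0$ is also a short exact sequence. -/
import Mathlib


open CategoryTheory CategoryTheory.Limits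

section Aux

variable {C : Type*} [Category C]

/-- Transfer an `IsLimit` of a kernel fork along an equality of the maps. -/
noncomputable def kernelForkIsLimitCongr {X Y K : C} [Limits.HasZeroMorphisms C]
    {f g : X ⟶ Y} (h : f = g) (ι : K ⟶ X) (w : ι ≫ f = 0) (w' : ι ≫ g = 0)
    (hl : IsLimit (KernelFork.ofι ι w)) : IsLimit (KernelFork.ofι ι w') := by
  subst h; exact hl

/-- Transfer an `IsColimit` of a cokernel cofork along an equality of the maps. -/
noncomputable def cokernelCoforkIsColimitCongr {X Y Q : C} [Limits.HasZeroMorphisms C]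
    {f g : X ⟶ Y} (h : f = g) (π : Y ⟶ Q) (w : f ≫ π = 0) (w' : g ≫ π = 0)
    (hc : IsColimit (CokernelCofork.ofπ π w)) : IsColimit (CokernelCofork.ofπ π w') := by
  subst h; exact hc

/-- `-𝟙 X` as an isomorphism, in a preadditive category. -/
@[simps] def negIdIso [Preadditive C] (X : C) : X ≅ X where
  hom := -𝟙 X
  inv := -𝟙 X
  hom_inv_id := by simp
  inv_hom_id := by simp

end Aux

/-- **Lemma 5.3 (Statement 0).** Given short exact sequences
`0 → M₁ → F ⊞ M₂ → M₃ → 0` (with maps `(ι₁, ι₂)ᵀ` and `(ν₁, ν₂)`) and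
`0 → M₂ → M₃ ⊞ M₄ → M₅ → 0` (with maps `(ν₂, ν₃)ᵀ` and `(μ₁, μ₂)`) in an abelian
category, the sequence `0 → M₁ → F ⊞ M₄ → M₅ → 0` with maps `(ι₁, ι₂ ≫ ν₃)ᵀ` and
`(ν₁ ≫ μ₁, -μ₂)` is also short exact. -/
theorem stmt0 {C : Type*} [Category C] [Abelian C]
    (M₁ F M₂ M₃ M₄ M₅ : C)
    (ι₁ : M₁ ⟶ F) (ι₂ : M₁ ⟶ M₂) (ν₁ : F ⟶ M₃) (ν₂ : M₂ ⟶ M₃) (ν₃ : M₂ ⟶ M₄)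
    (μ₁ : M₃ ⟶ M₅) (μ₂ : M₄ ⟶ M₅)
    (w₁ : biprod.lift ι₁ ι₂ ≫ biprod.desc ν₁ ν₂ = 0)
    (h₁ : (ShortComplex.mk (biprod.lift ι₁ ι₂) (biprod.desc ν₁ ν₂) w₁).ShortExact)
    (w₂ : biprod.lift ν₂ ν₃ ≫ biprod.desc μ₁ μ₂ = 0)
    (h₂ : (ShortComplex.mk (biprod.lift ν₂ ν₃) (biprod.desc μ₁ μ₂) w₂).ShortExact) :
    ∃ w : biprod.lift ι₁ (ι₂ ≫ ν₃) ≫ biprod.desc (ν₁ ≫ μ₁) (-μ₂) = 0,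
      (ShortComplex.mk (biprod.lift ι₁ (ι₂ ≫ ν₃)) (biprod.desc (ν₁ ≫ μ₁) (-μ₂)) w).ShortExact := by
  have e₁ : ι₁ ≫ ν₁ + ι₂ ≫ ν₂ = 0 := by rw [← biprod.lift_desc]; exact w₁
  have e₂ : ν₂ ≫ μ₁ + ν₃ ≫ μ₂ = 0 := by rw [← biprod.lift_desc]; exact w₂
  have := h₁.mono_f
  have := h₁.epi_g
  have := h₂.mono_f
  have := h₂.epi_g
  -- the first sequence gives a pullback square (ι₁, ι₂; ν₁, -ν₂)
  have sq1 : CommSq ι₁ ι₂ ν₁ (-ν₂) := ⟨by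
    simp only [Preadditive.comp_neg]
    rw [eq_neg_iff_add_eq_zero]; exact e₁⟩
  have P1 : IsPullback ι₁ ι₂ ν₁ (-ν₂) := by
    refine IsPullback.of_isLimit (sq1.isLimitEquivIsLimitKernelFork.symm ?_)
    exact kernelForkIsLimitCongr (by rw [neg_neg]) _ _ _ h₁.exact.fIsKernel
  -- the second sequence gives a pullback square (ν₂, ν₃; μ₁, -μ₂)
  have sq2 : CommSq ν₂ ν₃ μ₁ (-μ₂) := ⟨by
    simp only [Preadditive.comp_neg]
    rw [eq_neg_iff_add_eq_zero]; exact e₂⟩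
  have P2 : IsPullback ν₂ ν₃ μ₁ (-μ₂) := by
    refine IsPullback.of_isLimit (sq2.isLimitEquivIsLimitKernelFork.symm ?_)
    exact kernelForkIsLimitCongr (by rw [neg_neg]) _ _ _ h₂.exact.fIsKernel
  -- twist the second pullback square by -1
  have T2 : IsPullback (-ν₂) ν₃ μ₁ μ₂ :=
    P2.of_iso (Iso.refl M₂) (negIdIso M₃) (Iso.refl M₄) (negIdIso M₅)
      (by simp) (by simp) (by simp) (by simp)
  -- paste the pullback squares
  have FP : IsPullback ι₁ (ι₂ ≫ ν₃) (ν₁ ≫ μ₁) μ₂ := P1.paste_vert T2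
  -- the first sequence gives a pushout square (ι₁, -ι₂; ν₁, ν₂)
  have sq1' : CommSq ι₁ (-ι₂) ν₁ ν₂ := ⟨by
    simp only [Preadditive.neg_comp]
    rw [eq_neg_iff_add_eq_zero]
    exact e₁
    ⟩
  have Q1 : IsPushout ι₁ (-ι₂) ν₁ ν₂ := by
    refine IsPushout.of_isColimit (sq1'.isColimitEquivIsColimitCokernelCofork.symm ?_)
    exact cokernelCoforkIsColimitCongr (by rw [neg_neg]) _ _ _ h₁.exact.gIsCokernel
  -- the second sequence gives a pushout square (ν₂, -ν₃; μ₁, μ₂)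
  have sq2' : CommSq ν₂ (-ν₃) μ₁ μ₂ := ⟨by
    simp only [Preadditive.neg_comp]
    rw [eq_neg_iff_add_eq_zero]
    exact e₂⟩
  have Q2 : IsPushout ν₂ (-ν₃) μ₁ μ₂ := by
    refine IsPushout.of_isColimit (sq2'.isColimitEquivIsColimitCokernelCofork.symm ?_)
    exact cokernelCoforkIsColimitCongr (by rw [neg_neg]) _ _ _ h₂.exact.gIsCokernel
  -- twist the second pushout square by -1
  have T2' : IsPushout ν₂ ν₃ μ₁ (-μ₂) :=
    Q2.of_iso (Iso.refl M₂) (Iso.refl M₃) (negIdIso M₄) (Iso.refl M₅)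
      (by simp) (by simp) (by simp) (by simp)
  -- paste the pushout squares
  have FQ : IsPushout ι₁ ((-ι₂) ≫ ν₃) (ν₁ ≫ μ₁) (-μ₂) := Q1.paste_vert T2'
  rw [Preadditive.neg_comp] at FQ
  -- translate back: `FP` says the new `f` is a kernel, `FQ` that the new `g` is a cokernel
  have w : biprod.lift ι₁ (ι₂ ≫ ν₃) ≫ biprod.desc (ν₁ ≫ μ₁) (-μ₂) = 0 := by
    rw [biprod.lift_desc]
    have := FP.w
    rw [← sub_eq_zero]
    simpa [sub_eq_add_neg] using congrArg (· + (ι₂ ≫ ν₃) ≫ (-μ₂)) this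
  refine ⟨w, ?_⟩
  have hker : IsLimit (KernelFork.ofι (biprod.lift ι₁ (ι₂ ≫ ν₃)) w) := by
    have := FP.isLimitKernelFork
    exact kernelForkIsLimitCongr rfl _ _ _ this
  have hcoker : IsColimit (CokernelCofork.ofπ (biprod.desc (ν₁ ≫ μ₁) (-μ₂)) w) := by
    have := FQ.isColimitCokernelCofork
    exact cokernelCoforkIsColimitCongr (by rw [neg_neg]) _ _ _ this
  exact
    { exact := ShortComplex.exact_of_f_is_kernel _ hker
      mono_f := mono_of_isLimit_fork hker
      epi_g := epi_of_isColimit_cofork hcoker }
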